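/- Fix k ≥ 2. For every function f with f(n) = o(n²) and f(n) ≥ 2n, and every large n, the graph G obtained from the Turán graph T_k(n) by moving ⌈f(n)^{1/2}⌉ vertices from one class to another satisfies e(G) ≥ t_k(n) − O(f(n)), and any way to transform G into T_k(n) requires adding and deleting at least Ω(f(n)^{1/2}·n) edges. -/

import Mathlib

open SimpleGraph Filter

/-- Number of edges of a graph. -/
noncomputable def edgeCount {V : Type*} (G : SimpleGraph V) : ℕ := Nat.card G.edgeSet

/-- `tk k n` is the number of edges of the `k`-partite Turán graph on `n` vertices. -/
noncomputable def tk (k n : ℕ) : ℕ := edgeCount (turanGraph n k)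

/-- The graph obtained from the Turán graph `turanGraph n k` (whose classes are the
residues mod `k`) by moving `m` vertices from class `1` to class `0`. -/
def movedTuran (n k m : ℕ) : SimpleGraph (Fin n) :=
  SimpleGraph.fromRel (fun x y =>
    (if (x : ℕ) % k = 1 ∧ (x : ℕ) < k * m then 0 else (x : ℕ) % k) ≠
    (if (y : ℕ) % k = 1 ∧ (y : ℕ) < k * m then 0 else (y : ℕ) % k))

open Finset

/-- the coloring of the moved Turán graph -/
def cg (k m x : ℕ) : ℕ := if x % k = 1 ∧ x < k * m then 0 else x % k

lemma movedTuran_adj {n k m : ℕ} {x y : Fin n} :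
    (movedTuran n k m).Adj x y ↔ cg k m x ≠ cg k m y := by
  simp only [movedTuran, fromRel_adj, cg]
  constructor
  · rintro ⟨-, h | h⟩
    · exact h
    · exact h.symm
  · intro h
    refine ⟨?_, Or.inl h⟩
    rintro rfl; exact h rfl

instance mtDec (n k m : ℕ) : DecidableRel (movedTuran n k m).Adj := fun x y =>
  decidable_of_iff _ movedTuran_adj.symm

lemma turan_adj {n k : ℕ} {x y : Fin n} :
    (turanGraph n k).Adj x y ↔ (x : ℕ) % k ≠ (y : ℕ) % k := by
  simp [turanGraph]

lemma pair_card {n : ℕ} (G : SimpleGraph (Fin n)) [DecidableRel G.Adj] :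
    (univ.filter fun p : Fin n × Fin n => G.Adj p.1 p.2).card = 2 * edgeCount G := by
  have h1 : edgeCount G = G.edgeFinset.card := by
    rw [edgeCount, SimpleGraph.edgeFinset_card, Nat.card_eq_fintype_card]
  rw [h1, ← SimpleGraph.dart_card_eq_twice_card_edges, ← Fintype.card_subtype]
  exact Fintype.card_congr
    ⟨fun p => ⟨(p.1.1, p.1.2), p.2⟩, fun d => ⟨d.toProd, d.adj⟩, fun p => rfl, fun d => rfl⟩

lemma count_mod_le {n k : ℕ} (hk : 1 ≤ k) (g : Fin n → Fin n) (hg : Function.Injective g)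
    (i : ℕ) :
    (univ.filter fun x : Fin n => ((g x : Fin n) : ℕ) % k = i).card ≤ (n + k - 1) / k := by
  rw [← Finset.card_range ((n + k - 1) / k)]
  apply Finset.card_le_card_of_injOn (fun x => ((g x : Fin n) : ℕ) / k)
  · intro x hx
    simp only [Finset.coe_range, Set.mem_Iio]
    have hxn : ((g x : Fin n) : ℕ) < n := (g x).isLt
    have hn : 1 ≤ n := Nat.pos_of_ne_zero (by rintro rfl; exact absurd hxn (by omega))
    have h1 : ((g x : Fin n) : ℕ) / k ≤ (n - 1) / k := Nat.div_le_div_right (by omega)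
    have h2 : n + k - 1 = (n - 1) + k := by omega
    rw [h2, Nat.add_div_right _ hk]
    omega
  · intro x hx y hy hxy
    dsimp only at hxy
    simp only [Finset.coe_filter, Set.mem_setOf_eq, Finset.mem_univ, true_and] at hx hy
    have e1 := Nat.div_add_mod ((g x : Fin n) : ℕ) k
    have e2 := Nat.div_add_mod ((g y : Fin n) : ℕ) k
    have : ((g x : Fin n) : ℕ) = ((g y : Fin n) : ℕ) := by
      rw [← e1, ← e2, hxy, hx, hy]
    exact hg (Fin.ext this)

lemma le_count_mod0 {n k : ℕ} (hk : 1 ≤ k) (hn : 1 ≤ n) :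
    (n + k - 1) / k ≤ (univ.filter fun x : Fin n => (x : ℕ) % k = 0).card := by
  rw [← Finset.card_range ((n + k - 1) / k)]
  have hb : (n + k - 1) / k = (n - 1) / k + 1 := by
    rw [show n + k - 1 = (n - 1) + k by omega, Nat.add_div_right _ hk]
  have hn1 : n - 1 + 1 = n := by omega
  have key : ∀ i ∈ Finset.range ((n + k - 1) / k), i * k < n := by
    intro i hi
    rw [Finset.mem_range, hb] at hi
    have h1 : i ≤ (n - 1) / k := by omega
    have h2 : i * k ≤ ((n - 1) / k) * k := Nat.mul_le_mul_right _ h1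
    have h3 : ((n - 1) / k) * k ≤ n - 1 := Nat.div_mul_le_self _ _
    linarith
  apply Finset.card_le_card_of_injOn (fun i => (⟨i * k % n, Nat.mod_lt _ (by omega)⟩ : Fin n))
  · intro i hi
    simp only [Finset.mem_coe, Finset.mem_filter, Finset.mem_univ, true_and]
    rw [Nat.mod_eq_of_lt (key i hi), Nat.mul_mod_left]
  · intro i hi j hj hij
    simp only [Fin.mk.injEq] at hij
    rw [Nat.mod_eq_of_lt (key i (by simpa using hi)), Nat.mod_eq_of_lt (key j (by simpa using hj))] at hij
    exact Nat.eq_of_mul_eq_mul_right (by omega) hij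

lemma le_count_mod1 {n k : ℕ} (hk : 2 ≤ k) (hn : 1 ≤ n) :
    (n + k - 1) / k ≤ (univ.filter fun x : Fin n => (x : ℕ) % k = 1).card + 1 := by
  have hb : (n + k - 1) / k = (n - 1) / k + 1 := by
    rw [show n + k - 1 = (n - 1) + k by omega, Nat.add_div_right _ (by omega)]
  rw [hb]
  have hn1 : n - 1 + 1 = n := by omega
  have key : ∀ i ∈ Finset.range ((n - 1) / k), i * k + 1 < n := by
    intro i hi
    rw [Finset.mem_range] at hi
    have h1 : i + 1 ≤ (n - 1) / k := hi
    have h2 : (i + 1) * k ≤ ((n - 1) / k) * k := Nat.mul_le_mul_right _ h1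
    have h3 : ((n - 1) / k) * k ≤ n - 1 := Nat.div_mul_le_self _ _
    have h4 : i * k + k ≤ n - 1 := by nlinarith
    linarith
  have main : (n - 1) / k ≤ (univ.filter fun x : Fin n => (x : ℕ) % k = 1).card := by
    rw [← Finset.card_range ((n - 1) / k)]
    apply Finset.card_le_card_of_injOn
      (fun i => (⟨(i * k + 1) % n, Nat.mod_lt _ (by omega)⟩ : Fin n))
    · intro i hi
      simp only [Finset.mem_coe, Finset.mem_filter, Finset.mem_univ, true_and]
      rw [Nat.mod_eq_of_lt (key i hi), Nat.add_comm, Nat.add_mul_mod_self_right]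
      exact Nat.mod_eq_of_lt (by omega)
    · intro i hi j hj hij
      simp only [Fin.mk.injEq] at hij
      rw [Nat.mod_eq_of_lt (key i (by simpa using hi)), Nat.mod_eq_of_lt (key j (by simpa using hj))] at hij
      have : i * k = j * k := by omega
      exact Nat.eq_of_mul_eq_mul_right (by omega) this
  omega

lemma mov_card {n k m : ℕ} (hk : 2 ≤ k) (hmn : k * m ≤ n) :
    (univ.filter fun x : Fin n => (x : ℕ) % k = 1 ∧ (x : ℕ) < k * m).card = m := by
  have key : ∀ i, i < m → i * k + 1 < k * m := by
    intro i hi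
    have h2 : (i + 1) * k ≤ m * k := Nat.mul_le_mul_right _ hi
    nlinarith
  have key2 : ∀ i, i < m → i * k + 1 < n := fun i hi => lt_of_lt_of_le (key i hi) hmn
  conv_rhs => rw [← Finset.card_range m]
  refine Finset.card_bij' (fun (x : Fin n) _ => (x : ℕ) / k)
    (fun i hi => ⟨i * k + 1, key2 i (Finset.mem_range.mp hi)⟩) ?_ ?_ ?_ ?_
  · intro x hx
    simp only [Finset.mem_filter, Finset.mem_univ, true_and] at hx
    rw [Finset.mem_range]
    exact Nat.div_lt_of_lt_mul hx.2
  · intro i hi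
    have hi' := Finset.mem_range.mp hi
    simp only [Finset.mem_filter, Finset.mem_univ, true_and]
    refine ⟨?_, ?_⟩
    · show (i * k + 1) % k = 1
      rw [Nat.add_comm, Nat.add_mul_mod_self_right]
      exact Nat.mod_eq_of_lt (by omega)
    · show i * k + 1 < k * m
      exact key i hi'
  · intro x hx
    simp only [Finset.mem_filter, Finset.mem_univ, true_and] at hx
    apply Fin.ext
    show ((x : ℕ) / k) * k + 1 = (x : ℕ)
    have h := Nat.div_add_mod (x : ℕ) k
    have hx1 := hx.1
    linarith
  · intro i hi
    show (i * k + 1) / k = i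
    rw [Nat.add_comm, Nat.mul_comm, Nat.add_mul_div_left _ _ (by omega : 0 < k),
      Nat.div_eq_of_lt (by omega : 1 < k)]
    omega

lemma n_le_kb {n k : ℕ} (hk : 1 ≤ k) : n ≤ k * ((n + k - 1) / k) := by
  have h := Nat.div_add_mod (n + k - 1) k
  have h2 : (n + k - 1) % k < k := Nat.mod_lt _ (by omega)
  set t := k * ((n + k - 1) / k) with ht
  omega
lemma class_eq {k m x y : ℕ} (hT : x % k ≠ y % k) (hG : cg k m x = cg k m y) :
    (x % k = 1 ∧ x < k * m ∧ y % k = 0) ∨ (y % k = 1 ∧ y < k * m ∧ x % k = 0) := by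
  unfold cg at hG
  split_ifs at hG with h1 h2 h3
  · exact absurd (h1.1.trans h2.1.symm) hT
  · exact Or.inl ⟨h1.1, h1.2, hG.symm⟩
  · exact Or.inr ⟨h3.1, h3.2, hG⟩
  · exact absurd hG hT

lemma partA {n k m : ℕ} (hk : 2 ≤ k) (hmn : k * m ≤ n) (hn : 1 ≤ n) :
    tk k n ≤ edgeCount (movedTuran n k m) + (m * m + m) := by
  have hk1 : 1 ≤ k := by omega
  set R0 := univ.filter (fun x : Fin n => (x : ℕ) % k = 0) with hR0
  set R1 := univ.filter (fun x : Fin n => (x : ℕ) % k = 1) with hR1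
  set Mov := univ.filter (fun x : Fin n => (x : ℕ) % k = 1 ∧ (x : ℕ) < k * m) with hMov
  set b := (n + k - 1) / k with hb
  set DTG := univ.filter (fun p : Fin n × Fin n =>
    (turanGraph n k).Adj p.1 p.2 ∧ ¬ (movedTuran n k m).Adj p.1 p.2) with hDTG
  set DGT := univ.filter (fun p : Fin n × Fin n =>
    (movedTuran n k m).Adj p.1 p.2 ∧ ¬ (turanGraph n k).Adj p.1 p.2) with hDGT
  have hMovCard : Mov.card = m := mov_card hk hmn
  -- the key identity
  have e1 : univ.filter (fun p : Fin n × Fin n =>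
      (turanGraph n k).Adj p.1 p.2 ∨ (movedTuran n k m).Adj p.1 p.2)
      = (univ.filter fun p : Fin n × Fin n => (turanGraph n k).Adj p.1 p.2) ∪ DGT := by
    ext p
    simp only [hDGT, mem_filter, mem_union, mem_univ, true_and]
    tauto
  have e2 : univ.filter (fun p : Fin n × Fin n =>
      (turanGraph n k).Adj p.1 p.2 ∨ (movedTuran n k m).Adj p.1 p.2)
      = (univ.filter fun p : Fin n × Fin n => (movedTuran n k m).Adj p.1 p.2) ∪ DTG := by
    ext p
    simp only [hDTG, mem_filter, mem_union, mem_univ, true_and]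
    tauto
  have d1 : Disjoint (univ.filter fun p : Fin n × Fin n => (turanGraph n k).Adj p.1 p.2) DGT := by
    rw [Finset.disjoint_left]
    intro p hp hp'
    simp only [mem_filter] at hp
    simp only [hDGT, mem_filter] at hp'
    exact hp'.2.2 hp.2
  have d2 : Disjoint (univ.filter fun p : Fin n × Fin n => (movedTuran n k m).Adj p.1 p.2) DTG := by
    rw [Finset.disjoint_left]
    intro p hp hp'
    simp only [mem_filter] at hp
    simp only [hDTG, mem_filter] at hp'
    exact hp'.2.2 hp.2
  have hid : (univ.filter fun p : Fin n × Fin n => (turanGraph n k).Adj p.1 p.2).card + DGT.card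
      = (univ.filter fun p : Fin n × Fin n => (movedTuran n k m).Adj p.1 p.2).card + DTG.card := by
    rw [← Finset.card_union_of_disjoint d1, ← Finset.card_union_of_disjoint d2, ← e1, ← e2]
  -- upper bound on DTG
  have hDTGle : DTG.card ≤ m * R0.card + R0.card * m := by
    have hsub : DTG ⊆ (Mov ×ˢ R0) ∪ (R0 ×ˢ Mov) := by
      intro p hp
      simp only [hDTG, mem_filter, mem_univ, true_and] at hp
      obtain ⟨hT, hG⟩ := hp
      rw [turan_adj] at hT
      have hcg : cg k m (p.1 : ℕ) = cg k m (p.2 : ℕ) := by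
        by_contra h; exact hG (movedTuran_adj.mpr h)
      rcases class_eq hT hcg with ⟨h1, h2, h3⟩ | ⟨h1, h2, h3⟩
      · exact mem_union_left _ (mem_product.mpr
          ⟨by simp [hMov, h1, h2], by simp [hR0, h3]⟩)
      · exact mem_union_right _ (mem_product.mpr
          ⟨by simp [hR0, h3], by simp [hMov, h1, h2]⟩)
    calc DTG.card ≤ ((Mov ×ˢ R0) ∪ (R0 ×ˢ Mov)).card := card_le_card hsub
      _ ≤ (Mov ×ˢ R0).card + (R0 ×ˢ Mov).card := card_union_le _ _
      _ = m * R0.card + R0.card * m := by rw [card_product, card_product, hMovCard]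
  -- lower bound on DGT
  have hMovR1 : Mov ⊆ R1 := by
    intro x hx
    simp only [hMov, mem_filter] at hx
    simp only [hR1, mem_filter]
    exact ⟨hx.1, hx.2.1⟩
  have hDGTge : 2 * (m * (R1.card - m)) ≤ DGT.card := by
    have hsub : (Mov ×ˢ (R1 \ Mov)) ∪ ((R1 \ Mov) ×ˢ Mov) ⊆ DGT := by
      intro p hp
      simp only [mem_union, mem_product, Finset.mem_sdiff, hMov, hR1, mem_filter, mem_univ,
        true_and] at hp
      simp only [hDGT, mem_filter, mem_univ, true_and]
      rcases hp with ⟨⟨ha1, ha2⟩, hb1, hb2⟩ | ⟨⟨hb1, hb2⟩, ha1, ha2⟩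
      · have hb3 : ¬ ((p.2 : ℕ) < k * m) := fun h => hb2 ⟨hb1, h⟩
        constructor
        · rw [movedTuran_adj]
          have c1 : cg k m (p.1 : ℕ) = 0 := by simp [cg, ha1, ha2]
          have c2 : cg k m (p.2 : ℕ) = 1 := by simp [cg, hb1, hb3]
          omega
        · rw [turan_adj]
          simp [ha1, hb1]
      · have hb3 : ¬ ((p.1 : ℕ) < k * m) := fun h => hb2 ⟨hb1, h⟩
        constructor
        · rw [movedTuran_adj]
          have c1 : cg k m (p.2 : ℕ) = 0 := by simp [cg, ha1, ha2]
          have c2 : cg k m (p.1 : ℕ) = 1 := by simp [cg, hb1, hb3]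
          omega
        · rw [turan_adj]
          simp [ha1, hb1]
    have hdis : Disjoint (Mov ×ˢ (R1 \ Mov)) ((R1 \ Mov) ×ˢ Mov) := by
      rw [Finset.disjoint_left]
      intro p hp hp'
      rw [mem_product] at hp hp'
      exact (Finset.mem_sdiff.mp hp'.1).2 hp.1
    have hcard : (Mov ×ˢ (R1 \ Mov)).card + ((R1 \ Mov) ×ˢ Mov).card
        = 2 * (m * (R1.card - m)) := by
      rw [card_product, card_product, card_sdiff_of_subset hMovR1, hMovCard]
      ring
    calc 2 * (m * (R1.card - m)) = ((Mov ×ˢ (R1 \ Mov)) ∪ ((R1 \ Mov) ×ˢ Mov)).card := by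
          rw [Finset.card_union_of_disjoint hdis, hcard]
      _ ≤ DGT.card := card_le_card hsub
  -- residue class counts
  have hr0 : R0.card ≤ b := by
    have h := count_mod_le (n := n) hk1 id Function.injective_id 0
    simpa using h
  have hbr1 : b ≤ R1.card + 1 := le_count_mod1 hk hn
  have hmr1 : m ≤ R1.card := hMovCard ▸ card_le_card hMovR1
  have hsplit : m * (R1.card + 1) = m * (R1.card - m) + (m * m + m) := by
    rw [show R1.card + 1 = (R1.card - m) + m + 1 by omega]
    ring
  have hPT : (univ.filter fun p : Fin n × Fin n => (turanGraph n k).Adj p.1 p.2).card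
      = 2 * edgeCount (turanGraph n k) := pair_card _
  have hPG : (univ.filter fun p : Fin n × Fin n => (movedTuran n k m).Adj p.1 p.2).card
      = 2 * edgeCount (movedTuran n k m) := pair_card _
  have hDTGle2 : DTG.card ≤ 2 * (m * (R1.card - m)) + 2 * (m * m + m) := by
    have h1 : m * R0.card ≤ m * (R1.card + 1) := Nat.mul_le_mul_left _ (by omega)
    have h2 : R0.card * m ≤ (R1.card + 1) * m := Nat.mul_le_mul_right _ (by omega)
    calc DTG.card ≤ m * R0.card + R0.card * m := hDTGle
      _ ≤ m * (R1.card + 1) + (R1.card + 1) * m := by omega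
      _ = 2 * (m * (R1.card - m)) + 2 * (m * m + m) := by
          rw [Nat.mul_comm (R1.card + 1) m, hsplit]; ring
  have htk : tk k n = edgeCount (turanGraph n k) := rfl
  have hfin : 2 * tk k n ≤ 2 * edgeCount (movedTuran n k m) + 2 * (m * m + m) := by
    rw [htk]
    linarith [hid, hDTGle2, hDGTge, hPT, hPG]
  generalize hM : m * m + m = M at hfin ⊢
  omega

lemma partB {n k m : ℕ} (hk : 2 ≤ k) (hmn : k * m ≤ n) (hn : 1 ≤ n) (σ : Fin n ≃ Fin n) :
    m * ((n + k - 1) / k) ≤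
      2 * Nat.card ↑(symmDiff (movedTuran n k m).edgeSet
        ((turanGraph n k).map σ.toEmbedding).edgeSet) := by
  have hk1 : 1 ≤ k := by omega
  set b := (n + k - 1) / k with hb
  set d : Fin n → ℕ := fun x => ((σ.symm x : Fin n) : ℕ) % k with hd
  set A := univ.filter (fun x : Fin n => cg k m (x : ℕ) = 0) with hA
  have hAcard : b + m ≤ A.card := by
    have hsplit : A = (univ.filter fun x : Fin n => (x : ℕ) % k = 0) ∪
        (univ.filter fun x : Fin n => (x : ℕ) % k = 1 ∧ (x : ℕ) < k * m) := by
      ext x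
      simp only [hA, mem_filter, mem_union, mem_univ, true_and]
      unfold cg
      split_ifs with h
      · simp only [eq_self_iff_true, true_iff]
        exact Or.inr h
      · constructor
        · intro h0; exact Or.inl h0
        · rintro (h0 | h1)
          · exact h0
          · exact absurd h1 h
    have hdis : Disjoint (univ.filter fun x : Fin n => (x : ℕ) % k = 0)
        (univ.filter fun x : Fin n => (x : ℕ) % k = 1 ∧ (x : ℕ) < k * m) := by
      rw [Finset.disjoint_left]
      intro x hx hx'
      simp only [mem_filter] at hx hx'
      rw [hx.2] at hx'
      exact absurd hx'.2.1 (by norm_num)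
    rw [hsplit, Finset.card_union_of_disjoint hdis]
    exact Nat.add_le_add (le_count_mod0 hk1 hn) (le_of_eq (mov_card hk hmn).symm)
  have hfib : ∀ x : Fin n, (A.filter fun y => d y = d x).card ≤ b := by
    intro x
    calc (A.filter fun y => d y = d x).card
        ≤ (univ.filter fun y : Fin n => ((σ.symm y : Fin n) : ℕ) % k = d x).card := by
          apply card_le_card
          intro y hy
          simp only [hA, hd, mem_filter, mem_univ, true_and] at hy ⊢
          exact hy.2
      _ ≤ b := count_mod_le hk1 σ.symm σ.symm.injective (d x)
  set EQ := (A ×ˢ A).filter (fun p => d p.1 = d p.2) with hEQ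
  set NE := (A ×ˢ A).filter (fun p => ¬ d p.1 = d p.2) with hNE
  have hEQle : EQ.card ≤ A.card * b := by
    have hsub : EQ ⊆ A.biUnion
        (fun x => ({x} : Finset (Fin n)) ×ˢ (A.filter fun y => d y = d x)) := by
      intro p hp
      simp only [hEQ, mem_filter, mem_product] at hp
      rw [Finset.mem_biUnion]
      refine ⟨p.1, hp.1.1, ?_⟩
      rw [mem_product]
      exact ⟨mem_singleton_self _, mem_filter.mpr ⟨hp.1.2, hp.2.symm⟩⟩
    calc EQ.card ≤ _ := card_le_card hsub
      _ ≤ ∑ x ∈ A, (({x} : Finset (Fin n)) ×ˢ (A.filter fun y => d y = d x)).card :=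
          card_biUnion_le
      _ ≤ ∑ _x ∈ A, b := by
          apply Finset.sum_le_sum
          intro x _
          rw [card_product, card_singleton, one_mul]
          exact hfib x
      _ = A.card * b := by rw [Finset.sum_const, smul_eq_mul]
  have hNEcard : EQ.card + NE.card = A.card * A.card := by
    rw [hEQ, hNE, Finset.card_filter_add_card_filter_not, card_product]
  have hNEge : m * b ≤ NE.card := by
    have h2 : A.card * b + A.card * m ≤ EQ.card + NE.card := by
      calc A.card * b + A.card * m = A.card * (b + m) := by ring
        _ ≤ A.card * A.card := Nat.mul_le_mul_left _ hAcard
        _ = EQ.card + NE.card := hNEcard.symm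
    have h3 : A.card * m ≤ NE.card := by linarith [hEQle]
    calc m * b = b * m := Nat.mul_comm _ _
      _ ≤ A.card * m := Nat.mul_le_mul_right _ (le_trans (Nat.le_add_right b m) hAcard)
      _ ≤ NE.card := h3
  set E := NE.image (fun p => Sym2.mk p.1 p.2) with hE
  have hNE2E : NE.card ≤ 2 * E.card := by
    apply Finset.card_le_mul_card_image
    intro e he
    induction e using Sym2.ind with
    | _ a c =>
      have hsub : NE.filter (fun p => Sym2.mk p.1 p.2 = s(a, c)) ⊆ {(a, c), (c, a)} := by
        intro p hp
        simp only [mem_filter] at hp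
        rcases (Sym2.mk_eq_mk_iff (p := p) (q := (a, c))).mp hp.2 with h | h
        · rw [h]; exact mem_insert_self _ _
        · rw [h]; exact mem_insert_of_mem (mem_singleton_self _)
      calc _ ≤ ({(a, c), (c, a)} : Finset (Fin n × Fin n)).card := card_le_card hsub
        _ ≤ 2 := by
            apply le_trans (card_insert_le _ _)
            simp
  have hEsub : (↑E : Set (Sym2 (Fin n))) ⊆ symmDiff (movedTuran n k m).edgeSet
      ((turanGraph n k).map σ.toEmbedding).edgeSet := by
    intro e he
    rw [Finset.mem_coe, hE, Finset.mem_image] at he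
    obtain ⟨p, hp, rfl⟩ := he
    simp only [hNE, mem_filter, mem_product, hA, mem_univ, true_and, hd] at hp
    obtain ⟨⟨h1, h2⟩, h3⟩ := hp
    rw [Set.mem_symmDiff]
    right
    constructor
    · have hadj : ((turanGraph n k).map σ.toEmbedding).Adj p.1 p.2 := by
        rw [SimpleGraph.map_adj]
        exact ⟨σ.symm p.1, σ.symm p.2, turan_adj.mpr h3,
          Equiv.apply_symm_apply σ p.1, Equiv.apply_symm_apply σ p.2⟩
      exact (SimpleGraph.mem_edgeSet _).mpr hadj
    · intro hmem
      have hadj : (movedTuran n k m).Adj p.1 p.2 := (SimpleGraph.mem_edgeSet _).mp hmem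
      rw [movedTuran_adj] at hadj
      rw [h1, h2] at hadj
      exact hadj rfl
  have hcard : E.card ≤ Nat.card ↑(symmDiff (movedTuran n k m).edgeSet
      ((turanGraph n k).map σ.toEmbedding).edgeSet) := by
    rw [Nat.card_coe_set_eq]
    calc E.card = (↑E : Set (Sym2 (Fin n))).ncard := (Set.ncard_coe_finset E).symm
      _ ≤ _ := Set.ncard_le_ncard hEsub (Set.toFinite _)
  calc m * b ≤ NE.card := hNEge
    _ ≤ 2 * E.card := hNE2E
    _ ≤ 2 * Nat.card ↑(symmDiff (movedTuran n k m).edgeSet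
        ((turanGraph n k).map σ.toEmbedding).edgeSet) := Nat.mul_le_mul_left _ hcard

theorem stmt11 (k : ℕ) (hk : 2 ≤ k) (f : ℕ → ℝ)
    (hf : (fun n => f n) =o[atTop] fun n => (n : ℝ) ^ 2)
    (hf2 : ∀ n : ℕ, 2 * (n : ℝ) ≤ f n) :
    ∃ C : ℝ, 0 < C ∧ ∃ c : ℝ, 0 < c ∧ ∀ᶠ n : ℕ in atTop,
      (tk k n : ℝ) - C * f n ≤ (edgeCount (movedTuran n k ⌈Real.sqrt (f n)⌉₊) : ℝ) ∧
      ∀ σ : Fin n ≃ Fin n,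
        c * Real.sqrt (f n) * n ≤
          (Nat.card ↑(symmDiff (movedTuran n k ⌈Real.sqrt (f n)⌉₊).edgeSet
            ((turanGraph n k).map σ.toEmbedding).edgeSet) : ℝ) := by
  have hk0 : (0 : ℝ) < k := by
    have : (2 : ℝ) ≤ (k : ℝ) := by exact_mod_cast hk
    linarith
  refine ⟨3, by norm_num, 1 / (2 * (k : ℝ)), by positivity, ?_⟩
  have hpos : (0 : ℝ) < 1 / (16 * (k : ℝ) ^ 2) := by positivity
  filter_upwards [hf.def hpos, Filter.eventually_ge_atTop (2 * k + 9)] with n hnf hnN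
  have hn9 : 9 ≤ n := by omega
  have h2k : 2 * k ≤ n := by omega
  have hn1 : 1 ≤ n := by omega
  have hF2n : 2 * (n : ℝ) ≤ f n := hf2 n
  have hn0 : (0 : ℝ) ≤ (n : ℝ) := Nat.cast_nonneg n
  have hF0 : (0 : ℝ) ≤ f n := by linarith
  have hF18 : (18 : ℝ) ≤ f n := by
    have h9 : (9 : ℝ) ≤ (n : ℝ) := by exact_mod_cast hn9
    linarith
  have habs : f n ≤ (n : ℝ) ^ 2 / (16 * (k : ℝ) ^ 2) := by
    rw [Real.norm_eq_abs, Real.norm_eq_abs, abs_of_nonneg hF0,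
      abs_of_nonneg (sq_nonneg _)] at hnf
    calc f n ≤ 1 / (16 * (k : ℝ) ^ 2) * (n : ℝ) ^ 2 := hnf
      _ = (n : ℝ) ^ 2 / (16 * (k : ℝ) ^ 2) := by ring
  have hsqF : Real.sqrt (f n) ≤ (n : ℝ) / (4 * k) := by
    have h1 : Real.sqrt (f n) ≤ Real.sqrt ((n : ℝ) ^ 2 / (16 * (k : ℝ) ^ 2)) :=
      Real.sqrt_le_sqrt habs
    have h2 : Real.sqrt ((n : ℝ) ^ 2 / (16 * (k : ℝ) ^ 2)) = (n : ℝ) / (4 * k) := by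
      rw [show (n : ℝ) ^ 2 / (16 * (k : ℝ) ^ 2) = ((n : ℝ) / (4 * k)) ^ 2 by
        field_simp; ring, Real.sqrt_sq (by positivity)]
    linarith
  set m := ⌈Real.sqrt (f n)⌉₊ with hm
  have hmub : (m : ℝ) < Real.sqrt (f n) + 1 := Nat.ceil_lt_add_one (Real.sqrt_nonneg _)
  have hmlb : Real.sqrt (f n) ≤ (m : ℝ) := Nat.le_ceil _
  have hkm : k * m ≤ n := by
    have hkn : 2 * (k : ℝ) ≤ (n : ℝ) := by exact_mod_cast h2k
    have hcast : ((k * m : ℕ) : ℝ) ≤ (n : ℝ) := by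
      push_cast
      calc (k : ℝ) * m ≤ (k : ℝ) * (Real.sqrt (f n) + 1) :=
            mul_le_mul_of_nonneg_left (le_of_lt hmub) (le_of_lt hk0)
        _ ≤ (k : ℝ) * ((n : ℝ) / (4 * k) + 1) :=
            mul_le_mul_of_nonneg_left (by linarith) (le_of_lt hk0)
        _ = (n : ℝ) / 4 + k := by field_simp
        _ ≤ n := by linarith
    exact_mod_cast hcast
  constructor
  · have hA := partA (m := m) hk hkm hn1
    have hmsq : ((m * m + m : ℕ) : ℝ) ≤ 3 * f n := by
      push_cast
      have h4 : (4 : ℝ) ≤ Real.sqrt (f n) := by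
        rw [show (4 : ℝ) = Real.sqrt 16 by
          rw [show (16 : ℝ) = 4 ^ 2 by norm_num, Real.sqrt_sq (by norm_num)]]
        exact Real.sqrt_le_sqrt (by linarith)
      have hsq : Real.sqrt (f n) * Real.sqrt (f n) = f n := Real.mul_self_sqrt hF0
      nlinarith [hmub, hmlb, Real.sqrt_nonneg (f n)]
    have hcA : (tk k n : ℝ) ≤ (edgeCount (movedTuran n k m) : ℝ) + ((m * m + m : ℕ) : ℝ) := by
      exact_mod_cast hA
    linarith
  · intro σ
    have hB := partB (m := m) hk hkm hn1 σ
    have hnb : (n : ℝ) ≤ (k : ℝ) * ((n + k - 1) / k : ℕ) := by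
      exact_mod_cast n_le_kb (k := k) (n := n) (by omega)
    have hBr : (m : ℝ) * ((n + k - 1) / k : ℕ) ≤ 2 * (Nat.card
        ↑(symmDiff (movedTuran n k m).edgeSet
          ((turanGraph n k).map σ.toEmbedding).edgeSet) : ℝ) := by
      exact_mod_cast hB
    have hm0 : (0 : ℝ) ≤ (m : ℝ) := Nat.cast_nonneg m
    have h1 : Real.sqrt (f n) * (n : ℝ) ≤ (m : ℝ) * ((k : ℝ) * ((n + k - 1) / k : ℕ)) :=
      mul_le_mul hmlb hnb hn0 hm0
    calc 1 / (2 * (k : ℝ)) * Real.sqrt (f n) * (n : ℝ)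
        = (Real.sqrt (f n) * n) / (2 * k) := by ring
      _ ≤ ((m : ℝ) * ((k : ℝ) * ((n + k - 1) / k : ℕ))) / (2 * k) := by gcongr
      _ = (m : ℝ) * ((n + k - 1) / k : ℕ) / 2 := by field_simp
      _ ≤ (Nat.card ↑(symmDiff (movedTuran n k m).edgeSet
          ((turanGraph n k).map σ.toEmbedding).edgeSet) : ℝ) := by linarith
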